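/- The only W ⋉ Y_0-invariant elements of the polynomial algebra S(Z ⊕ ℂc), where Y_0 is a full lattice in the real form of Z and t_y acts on Z ⊕ ℂc by t_y(z + ηc) = z + (η - (z,y))c, are the polynomials in c alone: S(Z ⊕ ℂc)^{Y_0} = ℂ[c]. -/

import Mathlib

open MvPolynomial

/- The symmetric algebra S(Z ⊕ ℂc), with Z the complexification of V′ ≅ ℝⁿ, is modeled
as the polynomial algebra ℂ[z₁,…,zₙ,c] = MvPolynomial (Fin n ⊕ Unit) ℂ, the variable
X (inl i) corresponding to the i-th standard (orthonormal) basis vector eᵢ of V′ and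
X (inr ()) to c.  The translation t_y acts by t_y(z + ηc) = z + (η - (z,y))c, i.e. on
generators by zᵢ ↦ zᵢ - (eᵢ,y)·c = zᵢ - yᵢ·c and c ↦ c. -/

/-- The algebra automorphism of S(Z ⊕ ℂc) induced by the translation t_y. -/
noncomputable def transAction (n : ℕ) (y : Fin n → ℝ) :
    MvPolynomial (Fin n ⊕ Unit) ℂ →ₐ[ℂ] MvPolynomial (Fin n ⊕ Unit) ℂ :=
  aeval (fun j => match j with
    | Sum.inl i => X (Sum.inl i) - C ((y i : ℝ) : ℂ) * X (Sum.inr ())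
    | Sum.inr _ => X (Sum.inr ()))

/-- Every real vector, complexified coordinatewise, lies in the complex span of the
complexification of a real basis. -/
lemma real_mem_span_complexify {n : ℕ} (b : Module.Basis (Fin n) ℝ (Fin n → ℝ))
    (r : Fin n → ℝ) :
    (fun i => ((r i : ℝ) : ℂ)) ∈ Submodule.span ℂ
      (Set.range fun j => fun i => ((b j i : ℝ) : ℂ)) := by
  have hsum : ∑ j, b.repr r j • b j = r := b.sum_repr r
  have hkey : (fun i => ((r i : ℝ) : ℂ))
      = ∑ j, ((b.repr r j : ℝ) : ℂ) • (fun i => ((b j i : ℝ) : ℂ)) := by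
    funext i
    rw [Finset.sum_apply]
    have h := congrFun hsum i
    rw [Finset.sum_apply] at h
    simp only [Pi.smul_apply, smul_eq_mul] at h ⊢
    rw [← h]
    push_cast
    rfl
  rw [hkey]
  exact Submodule.sum_mem _ fun j _ =>
    Submodule.smul_mem _ _ (Submodule.subset_span ⟨j, rfl⟩)

/-- The complex span of the complexification of a real basis of ℝⁿ is all of ℂⁿ. -/
lemma mem_span_complexify {n : ℕ} (b : Module.Basis (Fin n) ℝ (Fin n → ℝ))
    (x : Fin n → ℂ) :
    x ∈ Submodule.span ℂ (Set.range fun j => fun i => ((b j i : ℝ) : ℂ)) := by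
  have hx : x = (fun i => (((x i).re : ℝ) : ℂ))
      + Complex.I • (fun i => (((x i).im : ℝ) : ℂ)) := by
    funext i
    simp only [Pi.add_apply, Pi.smul_apply, smul_eq_mul]
    rw [mul_comm]
    exact (Complex.re_add_im (x i)).symm
  rw [hx]
  exact add_mem (real_mem_span_complexify b _)
    (Submodule.smul_mem _ _ (real_mem_span_complexify b _))

/-- the only elements of S(Z ⊕ ℂc) invariant under the translations t_y for
y in a full lattice Y₀ of V′ are the polynomials in c: S(Z ⊕ ℂc)^{Y₀} = ℂ[c]. -/
theorem stmt8 {n : ℕ} (b : Module.Basis (Fin n) ℝ (Fin n → ℝ))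
    (Y0 : AddSubgroup (Fin n → ℝ)) (hY0 : Y0 = AddSubgroup.closure (Set.range b))
    (p : MvPolynomial (Fin n ⊕ Unit) ℂ)
    (hp : ∀ y ∈ Y0, transAction n y p = p) :
    p ∈ Algebra.adjoin ℂ ({X (Sum.inr ())} : Set (MvPolynomial (Fin n ⊕ Unit) ℂ)) := by
  classical
  subst hY0
  -- Invariance at the level of evaluations.
  have heval : ∀ y ∈ AddSubgroup.closure (Set.range b), ∀ v : Fin n ⊕ Unit → ℂ,
      (aeval (fun j => match j with
        | Sum.inl i => v (Sum.inl i) - ((y i : ℝ) : ℂ) * v (Sum.inr ())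
        | Sum.inr _ => v (Sum.inr ())) p : ℂ) = aeval v p := by
    intro y hy v
    have h := congrArg (aeval (R := ℂ) v) (hp y hy)
    rw [transAction, comp_aeval_apply] at h
    rw [← h]
    have hfn : (fun j : Fin n ⊕ Unit => match j with
        | Sum.inl i => v (Sum.inl i) - ((y i : ℝ) : ℂ) * v (Sum.inr ())
        | Sum.inr _ => v (Sum.inr ()))
        = fun j : Fin n ⊕ Unit => (aeval v) (match j with
          | Sum.inl i => X (Sum.inl i) - C ((y i : ℝ) : ℂ) * X (Sum.inr ())
          | Sum.inr _ => X (Sum.inr ())) := by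
      funext j
      cases j with
      | inl i => simp
      | inr u => cases u; simp
    rw [hfn]
  -- Main step: if the `c`-coordinate is nonzero, the evaluation does not depend on the
  -- `z`-coordinates.
  have hmain : ∀ v : Fin n ⊕ Unit → ℂ, v (Sum.inr ()) ≠ 0 →
      (aeval v p : ℂ)
        = aeval (Sum.elim (0 : Fin n → ℂ) (fun _ => v (Sum.inr ()))) p := by
    intro v ht
    set t := v (Sum.inr ()) with htdef
    set E : (Fin n → ℂ) → ℂ := fun u => aeval (Sum.elim u fun _ => t) p with hE
    -- one-parameter invariance in each basis direction
    have step : ∀ (j : Fin n) (u : Fin n → ℂ) (s : ℂ),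
        E (fun i => u i - s * t * ((b j i : ℝ) : ℂ)) = E u := by
      intro j u s
      set P : Polynomial ℂ := aeval (fun jj => match jj with
        | Sum.inl i => Polynomial.C (u i)
            - Polynomial.C (t * ((b j i : ℝ) : ℂ)) * Polynomial.X
        | Sum.inr _ => Polynomial.C t) p with hPdef
      have hPeval : ∀ s : ℂ, Polynomial.eval s P
          = E (fun i => u i - s * t * ((b j i : ℝ) : ℂ)) := by
        intro s
        rw [hPdef, ← Polynomial.coe_aeval_eq_eval, comp_aeval_apply, hE]
        have hfn : (fun jj : Fin n ⊕ Unit => (Polynomial.aeval s) (match jj with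
            | Sum.inl i => Polynomial.C (u i)
                - Polynomial.C (t * ((b j i : ℝ) : ℂ)) * Polynomial.X
            | Sum.inr _ => Polynomial.C t))
            = Sum.elim (fun i => u i - s * t * ((b j i : ℝ) : ℂ)) fun _ => t := by
          funext jj
          cases jj with
          | inl i => simp; ring
          | inr u' => cases u'; simp
        rw [hfn]
      have hroots : ∀ k : ℤ, Polynomial.eval ((k : ℂ)) P = E u := by
        intro k
        rw [hPeval]
        have hy : (k • b j) ∈ AddSubgroup.closure (Set.range b) :=
          AddSubgroup.zsmul_mem _ (AddSubgroup.subset_closure (Set.mem_range_self j)) k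
        have h := heval (k • b j) hy (Sum.elim u fun _ => t)
        simp only [hE]
        rw [← h]
        refine congrArg (fun w : Fin n ⊕ Unit → ℂ => (aeval (R := ℂ) w) p) ?_
        funext jj
        cases jj with
        | inl i =>
            simp only [Sum.elim_inl, Sum.elim_inr, Pi.smul_apply, zsmul_eq_mul]
            push_cast
            ring
        | inr u' => cases u'; rfl
      have hD : P - Polynomial.C (E u) = 0 := by
        apply Polynomial.eq_zero_of_infinite_isRoot
        refine Set.infinite_of_injective_forall_mem
          (f := fun k : ℤ => (k : ℂ)) Int.cast_injective ?_
        intro k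
        simp only [Set.mem_setOf_eq, Polynomial.IsRoot, Polynomial.eval_sub,
          Polynomial.eval_C, hroots k, sub_self]
      have hP : P = Polynomial.C (E u) := by
        have := sub_eq_zero.mp hD
        exact this
      rw [← hPeval s, hP, Polynomial.eval_C]
    -- translation invariance in each basis direction, arbitrary complex amount
    have step' : ∀ (j : Fin n) (u : Fin n → ℂ) (s : ℂ),
        E (u + s • fun i => ((b j i : ℝ) : ℂ)) = E u := by
      intro j u s
      have h1 := step j (u + s • fun i => ((b j i : ℝ) : ℂ)) (s / t)
      have harg : (fun i => (u + s • fun i => ((b j i : ℝ) : ℂ)) i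
          - (s / t) * t * ((b j i : ℝ) : ℂ)) = u := by
        funext i
        simp only [Pi.add_apply, Pi.smul_apply, smul_eq_mul]
        field_simp
        ring
      rw [harg] at h1
      exact h1.symm
    -- invariance under arbitrary finite sums of such translations
    have hsumstep : ∀ (c : Fin n → ℂ) (sfin : Finset (Fin n)) (u : Fin n → ℂ),
        E (u + ∑ j ∈ sfin, c j • fun i => ((b j i : ℝ) : ℂ)) = E u := by
      intro c sfin
      induction sfin using Finset.induction_on with
      | empty => intro u; simp
      | @insert a s' ha ih =>
          intro u
          rw [Finset.sum_insert ha, add_comm (c a • _), ← add_assoc]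
          rw [step' a (u + ∑ j ∈ s', c j • fun i => ((b j i : ℝ) : ℂ)) (c a)]
          exact ih u
    -- conclude
    obtain ⟨c, hc⟩ := Submodule.mem_span_range_iff_exists_fun ℂ |>.mp
      (mem_span_complexify b (fun i => v (Sum.inl i)))
    have h0 := hsumstep c Finset.univ 0
    rw [hc, zero_add] at h0
    have hv : (Sum.elim (fun i => v (Sum.inl i)) fun _ => t) = v := by
      funext jj
      cases jj with
      | inl i => rfl
      | inr u' => cases u'; rfl
    rw [hE] at h0
    rw [← hv]
    exact h0
  -- the "constant in z" polynomial obtained from p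
  have hadj : ∀ r : MvPolynomial (Fin n ⊕ Unit) ℂ,
      aeval (fun j => match j with
        | Sum.inl _ => (0 : MvPolynomial (Fin n ⊕ Unit) ℂ)
        | Sum.inr _ => X (Sum.inr ())) r
        ∈ Algebra.adjoin ℂ ({X (Sum.inr ())} : Set (MvPolynomial (Fin n ⊕ Unit) ℂ)) := by
    intro r
    induction r using MvPolynomial.induction_on with
    | C a => simpa using Subalgebra.algebraMap_mem (S := Algebra.adjoin ℂ ({X (Sum.inr ())} : Set (MvPolynomial (Fin n ⊕ Unit) ℂ))) a
    | add p' q' hp' hq' => rw [map_add]; exact add_mem hp' hq'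
    | mul_X p' j hp' =>
        rw [map_mul, aeval_X]
        cases j with
        | inl i => simpa using mul_mem hp' (zero_mem _)
        | inr u' => exact mul_mem hp' (Algebra.subset_adjoin rfl)
  set g : Fin n ⊕ Unit → MvPolynomial (Fin n ⊕ Unit) ℂ := fun j => match j with
    | Sum.inl _ => (0 : MvPolynomial (Fin n ⊕ Unit) ℂ)
    | Sum.inr _ => X (Sum.inr ()) with hg
  set q : MvPolynomial (Fin n ⊕ Unit) ℂ := aeval g p with hq
  -- p = q, via evaluation comparison
  have hae : ∀ (f : Fin n ⊕ Unit → ℂ) (r : MvPolynomial (Fin n ⊕ Unit) ℂ),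
      (aeval f r : ℂ) = eval f r := by
    intro f r
    rw [aeval_def, eval]
    simp [Algebra.algebraMap_self]
  have hfun : ∀ x : Fin n ⊕ Unit → ℂ,
      eval x (X (Sum.inr ()) * (p - q)) = eval x 0 := by
    intro x
    rw [map_mul, map_sub, eval_X, map_zero]
    by_cases hx : x (Sum.inr ()) = 0
    · rw [hx, zero_mul]
    · have h1 := hmain x hx
      have h2 : (aeval x q : ℂ)
          = aeval (Sum.elim (0 : Fin n → ℂ) (fun _ => x (Sum.inr ()))) p := by
        rw [hq, comp_aeval_apply]
        have hfn : (fun jj : Fin n ⊕ Unit => (aeval x) (g jj))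
            = Sum.elim (0 : Fin n → ℂ) (fun _ => x (Sum.inr ())) := by
          funext jj
          cases jj with
          | inl i => simp [hg]
          | inr u' => cases u'; simp [hg]
        rw [hfn]
      rw [← hae x p, ← hae x q, h1, h2, sub_self, mul_zero]
  have hz : X (Sum.inr ()) * (p - q) = 0 := by
    apply MvPolynomial.funext
    intro x
    exact hfun x
  have hpq : p = q := by
    rcases mul_eq_zero.mp hz with h | h
    · exact absurd h (MvPolynomial.X_ne_zero _)
    · exact sub_eq_zero.mp h
  rw [hpq, hq]
  exact hadj p
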